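/- arXiv:0812.0196 — 5 statements merged into one kernel-verified Lean document; each statement's English description precedes it below -/
import Mathlib

section
/- Let F ⊆ {−1,1}^s contain the point (1,...,1), and suppose the columns of its design matrix M (including the constant column of ones) are linearly dependent over the rationals. Then there exists a nonempty subset I ⊆ {1,...,s} such that ∏_{i∈I} x_i = 1 for all x ∈ F; i.e., F is contained in a regular fractional factorial design. -/
/-- Key combinatorial lemma: an integer relation on the "minus-one supports"
yields a parity relation. -/
lemma key_parity (s : ℕ) (F : Set (Fin s → ℚ))
    (hpm : ∀ x ∈ F, ∀ i, x i = 1 ∨ x i = -1) :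
    ∀ n (m : Fin s → ℤ), (∑ i, (m i).natAbs) ≤ n → (∃ i, m i ≠ 0) →
    (∀ x ∈ F, ∑ i ∈ Finset.univ.filter (fun i => x i = -1), m i = 0) →
    ∃ I : Finset (Fin s), I.Nonempty ∧ ∀ x ∈ F, ∏ i ∈ I, x i = 1 := by
  intro n
  induction n with
  | zero =>
      intro m hsum ⟨i, hi⟩ _
      have h0 : ∑ i, (m i).natAbs = 0 := Nat.le_zero.mp hsum
      have := Finset.sum_eq_zero_iff.mp h0 i (Finset.mem_univ i)
      exact absurd (Int.natAbs_eq_zero.mp this) hi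
  | succ n ih =>
      intro m hsum ⟨i0, hi0⟩ hrel
      by_cases hodd : ∃ i, ¬ (2 ∣ m i)
      · -- take I = set of odd coefficients
        obtain ⟨j0, hj0⟩ := hodd
        refine ⟨Finset.univ.filter (fun i => ¬ (2 ∣ m i)), ⟨j0, Finset.mem_filter.mpr ⟨Finset.mem_univ _, hj0⟩⟩, ?_⟩
        intro x hx
        set I : Finset (Fin s) := Finset.univ.filter (fun i => ¬ (2 ∣ m i)) with hI
        set Sx : Finset (Fin s) := Finset.univ.filter (fun i => x i = -1) with hSx
        -- the parity claim
        have hzmod : (((Sx.filter (fun i => ¬ (2 ∣ m i))).card : ℤ) : ZMod 2) = 0 := by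
          have h0 : ((∑ i ∈ Sx, m i : ℤ) : ZMod 2) = 0 := by
            rw [hrel x hx]; simp
          rw [Int.cast_sum] at h0
          have : ∀ i ∈ Sx, ((m i : ZMod 2)) =
              if ¬ (2 ∣ m i) then 1 else 0 := by
            intro i _
            by_cases h : 2 ∣ m i
            · simp [h, (ZMod.intCast_zmod_eq_zero_iff_dvd (m i) 2).mpr h]
            · rw [if_pos h]
              obtain ⟨k, hk⟩ : ∃ k, m i = 2 * k + 1 := ⟨m i / 2, by omega⟩
              rw [hk]
              push_cast
              have h2 : (2 : ZMod 2) = 0 := by decide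
              rw [h2]
              ring
          rw [Finset.sum_congr rfl this, Finset.sum_ite, Finset.sum_const,
            Finset.sum_const] at h0
          simpa using h0
        have hcard : Even (Sx.filter (fun i => ¬ (2 ∣ m i))).card := by
          have hdvd : (2 : ℤ) ∣ ((Sx.filter (fun i => ¬ (2 ∣ m i))).card : ℤ) :=
            (ZMod.intCast_zmod_eq_zero_iff_dvd _ 2).mp hzmod
          obtain ⟨k, hk⟩ := hdvd
          have hk' : (Sx.filter (fun i => ¬ (2 ∣ m i))).card = 2 * k.natAbs := by omega
          exact ⟨k.natAbs, by omega⟩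
        -- now compute the product
        have hsplit := Finset.prod_filter_mul_prod_filter_not I
          (fun i => x i = -1) (fun i => x i)
        have h1 : ∏ i ∈ I.filter (fun i => x i = -1), x i = 1 := by
          have hconst : ∏ i ∈ I.filter (fun i => x i = -1), x i =
              ∏ _i ∈ I.filter (fun i => x i = -1), (-1 : ℚ) := by
            refine Finset.prod_congr rfl ?_
            intro i hi
            exact (Finset.mem_filter.mp hi).2
          rw [hconst, Finset.prod_const]
          have hsame : I.filter (fun i => x i = -1) =
              Sx.filter (fun i => ¬ (2 ∣ m i)) := by
            rw [hI, hSx, Finset.filter_filter, Finset.filter_filter]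
            congr 1
            ext i
            exact and_comm
          rw [hsame]
          exact Even.neg_one_pow hcard
        have h2 : ∏ i ∈ I.filter (fun i => ¬ x i = -1), x i = 1 := by
          refine Finset.prod_eq_one ?_
          intro i hi
          have := (Finset.mem_filter.mp hi).2
          rcases hpm x hx i with h | h
          · exact h
          · exact absurd h this
        rw [← hsplit, h1, h2, one_mul]
      · -- all coefficients even: divide by 2
        push_neg at hodd
        set m' : Fin s → ℤ := fun i => m i / 2 with hm'
        have hmm : ∀ i, m i = 2 * m' i := fun i => (Int.mul_ediv_cancel' (hodd i)).symm
        have hne' : ∃ i, m' i ≠ 0 := by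
          refine ⟨i0, fun h => hi0 ?_⟩
          rw [hmm i0, h, mul_zero]
        have hnatabs : ∀ i, (m i).natAbs = 2 * (m' i).natAbs := by
          intro i; rw [hmm i, Int.natAbs_mul]; rfl
        have hsum' : (∑ i, (m' i).natAbs) ≤ n := by
          have h2s : 2 * ∑ i, (m' i).natAbs ≤ n + 1 := by
            calc 2 * ∑ i, (m' i).natAbs = ∑ i, (m i).natAbs := by
                  rw [Finset.mul_sum]; exact Finset.sum_congr rfl fun i _ => (hnatabs i).symm
              _ ≤ n + 1 := hsum
          obtain ⟨j, hj⟩ := hne'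
          have h1 : 1 ≤ ∑ i, (m' i).natAbs := by
            have hle : (m' j).natAbs ≤ ∑ i, (m' i).natAbs :=
              Finset.single_le_sum (f := fun i => (m' i).natAbs)
                (fun j _ => Nat.zero_le _) (Finset.mem_univ j)
            have hne0 : (m' j).natAbs ≠ 0 := fun h => hj (Int.natAbs_eq_zero.mp h)
            omega
          omega
        have hrel' : ∀ x ∈ F, ∑ i ∈ Finset.univ.filter (fun i => x i = -1), m' i = 0 := by
          intro x hx
          have := hrel x hx
          have h2 : ∑ i ∈ Finset.univ.filter (fun i => x i = -1), m i =
              2 * ∑ i ∈ Finset.univ.filter (fun i => x i = -1), m' i := by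
            rw [Finset.mul_sum]; exact Finset.sum_congr rfl fun i _ => hmm i
          omega
        exact ih m' hsum' hne' hrel'

/-- if the columns of the design matrix are linearly dependent over ℚ,
then F satisfies a generating relation, i.e. is contained in a regular design. -/
theorem columns_dependent_implies_subset_design (s : ℕ) (F : Set (Fin s → ℚ))
    (hpm : ∀ x ∈ F, ∀ i, x i = 1 ∨ x i = -1)
    (hone : (fun _ => (1 : ℚ)) ∈ F)
    (hcol : ∀ i : Fin s, ∃ x ∈ F, x i = -1)
    (hdep : ∃ c : Fin (s + 1) → ℚ, c ≠ 0 ∧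
        ∀ x ∈ F, c 0 + ∑ i : Fin s, c i.succ * x i = 0) :
    ∃ I : Finset (Fin s), I.Nonempty ∧ ∀ x ∈ F, ∏ i ∈ I, x i = 1 := by
  obtain ⟨c, hc, hrel⟩ := hdep
  set d : Fin s → ℚ := fun i => c i.succ with hd
  have h1 : c 0 + ∑ i, d i = 0 := by
    have := hrel _ hone
    simpa using this
  have hd0 : ∃ i, d i ≠ 0 := by
    by_contra h
    push_neg at h
    apply hc
    funext j
    refine Fin.cases ?_ ?_ j
    · have : ∑ i, d i = 0 := Finset.sum_eq_zero fun i _ => h i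
      rw [this, add_zero] at h1
      exact h1
    · intro i; exact h i
  -- derived relation: sum of d over the minus-one support is zero
  have hkey : ∀ x ∈ F, ∑ i ∈ Finset.univ.filter (fun i => x i = -1), d i = 0 := by
    intro x hx
    have h2 := hrel x hx
    have h3 : ∑ i, d i * (1 - x i) = 0 := by
      have : ∑ i, d i * (1 - x i) = ∑ i, d i - ∑ i, d i * x i := by
        rw [← Finset.sum_sub_distrib]
        exact Finset.sum_congr rfl fun i _ => by ring
      rw [this]
      have h4 : ∑ i, d i * x i = ∑ i, c i.succ * x i := rfl
      linarith [h2, h1]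
    have h5 : ∀ i ∈ Finset.univ, d i * (1 - x i) =
        if x i = -1 then 2 * d i else 0 := by
      intro i _
      rcases hpm x hx i with h | h
      · rw [h, if_neg (by norm_num : (1 : ℚ) ≠ -1)]; ring
      · rw [h, if_pos rfl]; ring
    rw [Finset.sum_congr rfl h5, Finset.sum_ite, Finset.sum_const, smul_zero,
      add_zero, ← Finset.mul_sum] at h3
    linarith [h3]
  -- clear denominators: integer vector
  set D : ℚ := ∏ j, ((d j).den : ℚ) with hD
  have hDpos : 0 < D := Finset.prod_pos fun j _ => by positivity
  have hint : ∀ i, ∃ z : ℤ, (z : ℚ) = d i * D := by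
    intro i
    refine ⟨(d i).num * ∏ j ∈ Finset.univ.erase i, ((d j).den : ℤ), ?_⟩
    push_cast
    rw [hD, ← Finset.mul_prod_erase Finset.univ _ (Finset.mem_univ i), ← mul_assoc,
      Rat.mul_den_eq_num]
  choose m hm using hint
  have hne : ∃ i, m i ≠ 0 := by
    obtain ⟨i, hi⟩ := hd0
    refine ⟨i, fun h => hi ?_⟩
    have := hm i
    rw [h] at this
    simp at this
    rcases this with h | h
    · exact h
    · exact absurd h (ne_of_gt hDpos)
  have hmrel : ∀ x ∈ F, ∑ i ∈ Finset.univ.filter (fun i => x i = -1), m i = 0 := by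
    intro x hx
    have : ((∑ i ∈ Finset.univ.filter (fun i => x i = -1), m i : ℤ) : ℚ) = 0 := by
      push_cast
      rw [Finset.sum_congr rfl fun i _ => hm i, ← Finset.sum_mul, hkey x hx, zero_mul]
    exact_mod_cast this
  exact key_parity s F hpm (∑ i, (m i).natAbs) m le_rfl hne hmrel
end

section
/- Let F ⊆ {−1,1}^s with (1,...,1) ∈ F, and suppose that for every nonempty I ⊆ {1,...,s} there exists x ∈ F with ∏_{i∈I} x_i = −1 (i.e., F is affinely full-dimensional). Then the design matrix M of F has linearly independent columns over the rationals; equivalently, MᵀM is nonsingular and the parameters of the main-effect linear model are simultaneously identifiable. -/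
/-- an affinely full-dimensional design has a design matrix with
linearly independent columns; in particular MᵀM is nonsingular. -/
theorem affinely_full_dimensional_identifiable (s : ℕ) (F : Finset (Fin s → ℚ))
    (hpm : ∀ x ∈ F, ∀ i, x i = 1 ∨ x i = -1)
    (hone : (fun _ => (1 : ℚ)) ∈ F)
    (hafd : ∀ I : Finset (Fin s), I.Nonempty → ∃ x ∈ F, ∏ i ∈ I, x i = -1)
    (M : Matrix F (Fin (s + 1)) ℚ)
    (hM : ∀ x j, M x j = Fin.cases 1 (fun i => (x : Fin s → ℚ) i) j) :
    LinearIndependent ℚ M.transpose ∧ (M.transpose * M).det ≠ 0 := by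
  classical
  have hli : LinearIndependent ℚ M.transpose := by
    refine Fintype.linearIndependent_iff.mpr ?_
    intro c hc
    -- the relation evaluated at each x ∈ F
    have hrel : ∀ x : F, c 0 + ∑ i : Fin s, c i.succ * (x : Fin s → ℚ) i = 0 := by
      intro x
      have := congrFun hc x
      simp only [Finset.sum_apply, Pi.smul_apply, Matrix.transpose_apply, Pi.zero_apply,
        smul_eq_mul] at this
      rw [← this]
      rw [Fin.sum_univ_succ]
      simp [hM]
    set d : Fin s → ℚ := fun i => c i.succ with hd
    -- main claim: d = 0
    have hd0 : ∀ i, d i = 0 := by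
      by_contra hne
      push_neg at hne
      obtain ⟨i0, hi0⟩ := hne
      set x1 : F := ⟨fun _ => (1 : ℚ), hone⟩ with hx1
      have h1 : c 0 + ∑ i : Fin s, d i = 0 := by
        have := hrel x1
        simpa [hx1] using this
      -- indicator of -1 entries, in ℤ
      set m : F → Fin s → ℤ := fun x i => if (x : Fin s → ℚ) i = -1 then 1 else 0 with hm
      have hmval : ∀ (x : F) (i : Fin s), (1 : ℚ) - (x : Fin s → ℚ) i = 2 * (m x i : ℚ) := by
        intro x i
        rcases hpm x x.2 i with h | h <;> norm_num [hm, h]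
      have hrel2 : ∀ x : F, ∑ i : Fin s, d i * (m x i : ℚ) = 0 := by
        intro x
        have h2 : ∑ i : Fin s, d i * (1 - (x : Fin s → ℚ) i) = 0 := by
          have := hrel x
          have h' : ∑ i : Fin s, d i * (1 - (x : Fin s → ℚ) i)
              = (c 0 + ∑ i : Fin s, d i) - (c 0 + ∑ i : Fin s, d i * (x : Fin s → ℚ) i) := by
            simp only [mul_sub, mul_one, Finset.sum_sub_distrib]
            ring
          rw [h', h1, this, sub_zero]
        have h3 : (2 : ℚ) * ∑ i : Fin s, d i * (m x i : ℚ) = 0 := by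
          rw [Finset.mul_sum]
          rw [← h2]
          refine Finset.sum_congr rfl fun i _ => ?_
          rw [hmval x i]; ring
        have := mul_eq_zero.mp h3
        rcases this with h | h
        · norm_num at h
        · exact h
      -- clear denominators: n = product of denominators
      set n : ℤ := ∏ i : Fin s, ((d i).den : ℤ) with hn
      have hnpos : 0 < n := Finset.prod_pos fun i _ => by positivity
      have hint : ∀ i : Fin s, ∃ z : ℤ, (z : ℚ) = d i * (n : ℚ) := by
        intro i
        obtain ⟨k, hk⟩ := Finset.dvd_prod_of_mem (fun j : Fin s => ((d j).den : ℤ))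
          (Finset.mem_univ i)
        refine ⟨(d i).num * k, ?_⟩
        rw [hn, hk]
        push_cast
        rw [← mul_assoc, Rat.mul_den_eq_num]
      choose e he using hint
      have hene : e i0 ≠ 0 := by
        intro h0
        have : (0 : ℚ) = d i0 * (n : ℚ) := by rw [← he i0, h0]; norm_num
        have h2 : d i0 * (n : ℚ) ≠ 0 := by
          apply mul_ne_zero hi0
          exact_mod_cast hnpos.ne'
        exact h2 this.symm
      -- integer relation
      have hrelZ : ∀ x : F, ∑ i : Fin s, e i * m x i = 0 := by
        intro x
        have : ((∑ i : Fin s, e i * m x i : ℤ) : ℚ) = 0 := by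
          push_cast
          calc ∑ i : Fin s, (e i : ℚ) * (m x i : ℚ)
              = (n : ℚ) * ∑ i : Fin s, d i * (m x i : ℚ) := by
                rw [Finset.mul_sum]
                refine Finset.sum_congr rfl fun i _ => ?_
                rw [he i]; ring
            _ = 0 := by rw [hrel2 x, mul_zero]
        exact_mod_cast this
      -- extract gcd to get a primitive integer relation
      haveI : Nonempty (Fin s) := ⟨i0⟩
      obtain ⟨f, hef, hgcd⟩ := Finset.extract_gcd e Finset.univ_nonempty
      have hg0 : Finset.gcd Finset.univ e ≠ 0 := by
        intro h
        exact hene ((Finset.gcd_eq_zero_iff.mp h) i0 (Finset.mem_univ i0))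
      have hrelf : ∀ x : F, ∑ i : Fin s, f i * m x i = 0 := by
        intro x
        have h2 : Finset.gcd Finset.univ e * ∑ i : Fin s, f i * m x i = 0 := by
          rw [Finset.mul_sum, ← hrelZ x]
          refine Finset.sum_congr rfl fun i _ => ?_
          rw [hef i (Finset.mem_univ i)]; ring
        rcases mul_eq_zero.mp h2 with h | h
        · exact absurd h hg0
        · exact h
      -- some f i is odd
      have hodd : ∃ i, ¬ (2 : ℤ) ∣ f i := by
        by_contra hall
        push_neg at hall
        have : (2 : ℤ) ∣ Finset.gcd Finset.univ f :=
          Finset.dvd_gcd fun i _ => hall i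
        rw [hgcd] at this
        norm_num at this
      set I : Finset (Fin s) := Finset.univ.filter (fun i => ¬ (2 : ℤ) ∣ f i) with hI
      have hIne : I.Nonempty := by
        obtain ⟨i, hi⟩ := hodd
        refine ⟨i, ?_⟩
        rw [hI, Finset.mem_filter]
        exact ⟨Finset.mem_univ i, hi⟩
      obtain ⟨x0, hx0F, hx0⟩ := hafd I hIne
      set x0' : F := ⟨x0, hx0F⟩ with hx0'
      -- count of -1 entries inside I
      set k : ℕ := (I.filter (fun i => x0 i = -1)).card with hk
      -- the product over I is (-1)^k
      have hprod : ∏ i ∈ I, x0 i = (-1 : ℚ) ^ k := by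
        rw [← Finset.prod_filter_mul_prod_filter_not I (fun i => x0 i = -1)]
        have h1 : ∏ i ∈ I.filter (fun i => x0 i = -1), x0 i = (-1 : ℚ) ^ k := by
          rw [hk, ← Finset.prod_const]
          exact Finset.prod_congr rfl fun i hi => (Finset.mem_filter.mp hi).2
        have h2 : ∏ i ∈ I.filter (fun i => ¬ x0 i = -1), x0 i = 1 := by
          refine Finset.prod_eq_one fun i hi => ?_
          rcases hpm x0 hx0F i with h | h
          · exact h
          · exact absurd h (Finset.mem_filter.mp hi).2
        rw [h1, h2, mul_one]
      have hkodd : Odd k := by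
        rw [hprod] at hx0
        rcases Nat.even_or_odd k with h | h
        · rw [h.neg_one_pow] at hx0; norm_num at hx0
        · exact h
      -- reduce the relation mod 2
      have hmod : ((∑ i : Fin s, f i * m x0' i : ℤ) : ZMod 2) = 0 := by
        rw [hrelf x0']; norm_num
      have hsum2 : (∑ i : Fin s, (f i : ZMod 2) * (m x0' i : ZMod 2)) = 0 := by
        rw [← hmod]; push_cast; ring
      have hsplit : ∑ i : Fin s, (f i : ZMod 2) * (m x0' i : ZMod 2)
          = ∑ i ∈ I, (m x0' i : ZMod 2) := by
        rw [← Finset.sum_filter_add_sum_filter_not Finset.univ (fun i => ¬ (2 : ℤ) ∣ f i)]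
        have h2 : ∑ i ∈ Finset.univ.filter (fun i => ¬¬ (2 : ℤ) ∣ f i),
            (f i : ZMod 2) * (m x0' i : ZMod 2) = 0 := by
          refine Finset.sum_eq_zero fun i hi => ?_
          have : (2 : ℤ) ∣ f i := not_not.mp (Finset.mem_filter.mp hi).2
          have : (f i : ZMod 2) = 0 := by
            rwa [ZMod.intCast_zmod_eq_zero_iff_dvd]
          rw [this, zero_mul]
        rw [h2, add_zero, hI]
        refine Finset.sum_congr rfl fun i hi => ?_
        have hfi : ¬ (2 : ℤ) ∣ f i := (Finset.mem_filter.mp hi).2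
        have hmod1 : f i % 2 = 1 := by
          rcases Int.emod_two_eq (f i) with h | h
          · exact absurd (Int.dvd_of_emod_eq_zero h) hfi
          · exact h
        have hcast : (f i : ZMod 2) = 1 := by
          have h2 := ZMod.intCast_mod (f i) 2
          rw [show ((2 : ℕ) : ℤ) = 2 from rfl, hmod1] at h2
          simpa using h2.symm
        rw [hcast, one_mul]
      have hcount : ∑ i ∈ I, ((m x0' i : ℤ) : ZMod 2) = (k : ZMod 2) := by
        rw [hk, ← Finset.sum_boole]
        refine Finset.sum_congr rfl fun i _ => ?_
        simp only [hm, hx0']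
        split_ifs <;> simp
      have hk2 : (k : ZMod 2) = 0 := by
        rw [← hcount, ← hsplit, hsum2]
      have hkm : k % 2 = 1 := Nat.odd_iff.mp hkodd
      have hk1 : (k : ZMod 2) = 1 := by
        rw [← ZMod.natCast_mod, hkm, Nat.cast_one]
      rw [hk1] at hk2
      exact one_ne_zero hk2
    have hc0 : c 0 = 0 := by
      have h := hrel ⟨fun _ => (1 : ℚ), hone⟩
      have hz : ∀ i : Fin s, c i.succ = 0 := hd0
      simpa [hz] using h
    intro j
    exact Fin.cases hc0 (fun i => hd0 i) j
  refine ⟨hli, ?_⟩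
  intro hdet
  obtain ⟨v, hv0, hv⟩ := (Matrix.exists_mulVec_eq_zero_iff).mpr hdet
  have hMv : M.mulVec v = 0 := by
    have hker : v ∈ LinearMap.ker (Matrix.mulVecLin (M.transpose * M)) := by
      rw [LinearMap.mem_ker, Matrix.mulVecLin_apply]
      exact hv
    rw [Matrix.ker_mulVecLin_transpose_mul_self] at hker
    rw [LinearMap.mem_ker, Matrix.mulVecLin_apply] at hker
    exact hker
  have : ∀ j, v j = 0 := by
    apply Fintype.linearIndependent_iff.mp hli
    funext x
    have := congrFun hMv x
    simp only [Matrix.mulVec, dotProduct, Pi.zero_apply] at this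
    simp only [Finset.sum_apply, Pi.smul_apply, Matrix.transpose_apply, smul_eq_mul,
      Pi.zero_apply]
    rw [← this]
    exact Finset.sum_congr rfl fun j _ => mul_comm _ _
  exact hv0 (funext this)
end

section
/- Let F ⊆ {−1,1}^{r−1} be a saturated design with r runs containing (1,...,1), with square design matrix M ∈ {−1,1}^{r×r} (first column of ones) whose other columns each contain a −1. Then F is an affinely full-dimensional factorial design (i.e., F is not a proper subset of any regular fractional factorial design) if and only if det M is not divisible by 2^r. -/
open Matrix Finset

lemma my_prod_pm {s : ℕ} (u : Fin s → ℤ) (hu : ∀ i, u i = 1 ∨ u i = -1) (I : Finset (Fin s)) :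
    ∏ i ∈ I, u i = 1 ∨ ∏ i ∈ I, u i = -1 := by
  classical
  induction I using Finset.induction with
  | empty => left; simp
  | @insert a I ha ih =>
    rw [Finset.prod_insert ha]
    rcases hu a with h | h <;> rcases ih with h2 | h2 <;> simp [h, h2]

lemma my_prod_eq_one_iff {s : ℕ} (u : Fin s → ℤ) (hu : ∀ i, u i = 1 ∨ u i = -1)
    (I : Finset (Fin s)) :
    (∏ i ∈ I, u i = 1) ↔ (∑ i ∈ I, (if u i = 1 then (0 : ZMod 2) else 1)) = 0 := by
  classical
  induction I using Finset.induction with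
  | empty => simp
  | @insert a I ha ih =>
    rw [Finset.prod_insert ha, Finset.sum_insert ha]
    have hzm : ∀ x : ZMod 2, x = 0 ∨ x = 1 := by decide
    rcases hu a with h | h
    · simp [h, ih]
    · have hne : u a ≠ 1 := by rw [h]; norm_num
      rw [if_neg hne, h]
      constructor
      · intro hp
        have hP : ∏ i ∈ I, u i = -1 := by linarith
        have hS : ¬ (∑ i ∈ I, (if u i = 1 then (0 : ZMod 2) else 1)) = 0 := by
          intro h0
          have := ih.mpr h0
          omega
        rcases hzm (∑ i ∈ I, (if u i = 1 then (0 : ZMod 2) else 1)) with h0 | h1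
        · exact absurd h0 hS
        · rw [h1]; decide
      · intro hS
        have h1 : (∑ i ∈ I, (if u i = 1 then (0 : ZMod 2) else 1)) = 1 := by
          rcases hzm (∑ i ∈ I, (if u i = 1 then (0 : ZMod 2) else 1)) with h0 | h1
          · rw [h0] at hS; exact absurd hS (by decide)
          · exact h1
        have hP : ∏ i ∈ I, u i ≠ 1 := by
          intro hp
          have := ih.mp hp
          rw [this] at h1
          exact absurd h1 (by decide)
        rcases my_prod_pm u hu I with h2 | h2
        · exact absurd h2 hP
        · rw [h2]; ring

/-- a saturated design is affinely full-dimensional iff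
the determinant of its design matrix is not divisible by 2^r. -/
theorem saturated_afd_iff_det_not_div (s : ℕ) (w : Fin (s + 1) → Fin s → ℤ)
    (hinj : Function.Injective w)
    (hpm : ∀ k i, w k i = 1 ∨ w k i = -1)
    (hone : w 0 = fun _ => 1)
    (hcol : ∀ i : Fin s, ∃ k, w k i = -1) :
    (∀ I : Finset (Fin s), I.Nonempty → ∃ k, ∏ i ∈ I, w k i = -1) ↔
      ¬ ((2 : ℤ) ^ (s + 1) ∣
        (Matrix.of (fun k j => Fin.cases 1 (fun i => w k i) j) :
          Matrix (Fin (s + 1)) (Fin (s + 1)) ℤ).det) := by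
  classical
  have hzm : ∀ x : ZMod 2, x = 0 ∨ x = 1 := by decide
  haveI : Fact (Nat.Prime 2) := ⟨Nat.prime_two⟩
  set M : Matrix (Fin (s + 1)) (Fin (s + 1)) ℤ :=
    Matrix.of (fun k j => Fin.cases 1 (fun i => w k i) j) with hM
  -- row-reduced matrix
  set M' : Matrix (Fin (s + 1)) (Fin (s + 1)) ℤ :=
    Matrix.of (fun k j => Fin.cases (M 0 j) (fun k' => M k'.succ j - M 0 j) k) with hM'
  have hrow0 : ∀ j, M 0 j = 1 := by
    intro j
    induction j using Fin.cases with
    | zero => rfl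
    | succ i => show w 0 i = 1; rw [hone]
  have hdetMM' : M.det = M'.det := by
    apply Matrix.det_eq_of_forall_row_eq_smul_add_const
      (fun k => Fin.cases 0 (fun _ => 1) k) 0 rfl
    intro i j
    induction i using Fin.cases with
    | zero => simp [hM']
    | succ k => simp [hM']
  -- the 0/1 matrix
  set B : Matrix (Fin s) (Fin s) ℤ :=
    Matrix.of (fun k i => if w k.succ i = 1 then (0 : ℤ) else 1) with hB
  have hsub : M'.submatrix Fin.succ Fin.succ = (-2 : ℤ) • B := by
    ext k i
    show M k.succ i.succ - M 0 i.succ = -2 * B k i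
    show w k.succ i - w 0 i = -2 * _
    rw [hone]
    rcases hpm k.succ i with h | h <;> simp [hB, h]
  have hdetM' : M'.det = (-2 : ℤ) ^ s * B.det := by
    rw [Matrix.det_succ_column_zero]
    rw [Finset.sum_eq_single 0]
    · have h00 : M' 0 0 = 1 := hrow0 0
      rw [Fin.succAbove_zero, hsub, Matrix.det_smul, h00]
      simp
    · intro i _ hi
      have : M' i 0 = 0 := by
        induction i using Fin.cases with
        | zero => exact absurd rfl hi
        | succ k =>
          show M k.succ 0 - M 0 0 = 0
          show (1 : ℤ) - 1 = 0
          ring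
      rw [this]; ring
    · intro h; exact absurd (Finset.mem_univ _) h
  -- divisibility reduction
  have hdvd : ((2 : ℤ) ^ (s + 1) ∣ M.det) ↔ (2 : ℤ) ∣ B.det := by
    rw [hdetMM', hdetM', neg_pow]
    have h2s : ((-1 : ℤ) ^ s * 2 ^ s * B.det) = (-1) ^ s * (2 ^ s * B.det) := by ring
    rw [h2s]
    rcases Nat.even_or_odd s with he | ho
    · rw [he.neg_one_pow, one_mul, pow_succ]
      exact mul_dvd_mul_iff_left (pow_ne_zero s (two_ne_zero))
    · rw [ho.neg_one_pow, neg_one_mul, dvd_neg, pow_succ]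
      exact mul_dvd_mul_iff_left (pow_ne_zero s (two_ne_zero))
  -- pass to ZMod 2
  have hcast : (B.map (Int.cast : ℤ → ZMod 2)) =
      Matrix.of (fun k i => if w k.succ i = 1 then (0 : ZMod 2) else 1) := by
    ext k i
    simp [hB, Matrix.map_apply, apply_ite (Int.cast : ℤ → ZMod 2)]
  have hdvd2 : ((2 : ℤ) ∣ B.det) ↔ (B.map (Int.cast : ℤ → ZMod 2)).det = 0 := by
    have h1 : (B.map (Int.cast : ℤ → ZMod 2)).det = ((B.det : ℤ) : ZMod 2) := by
      have h2 := (Int.castRingHom (ZMod 2)).map_det B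
      simpa [RingHom.mapMatrix_apply] using h2.symm
    rw [h1, ZMod.intCast_zmod_eq_zero_iff_dvd]
    norm_num
  -- singularity iff regular fraction
  have hsing : (B.map (Int.cast : ℤ → ZMod 2)).det = 0 ↔
      ∃ I : Finset (Fin s), I.Nonempty ∧ ∀ k : Fin (s + 1), ∏ i ∈ I, w k i = 1 := by
    rw [← Matrix.exists_mulVec_eq_zero_iff]
    constructor
    · rintro ⟨v, hv, hmv⟩
      refine ⟨Finset.univ.filter (fun i => v i = 1), ?_, ?_⟩
      · obtain ⟨i, hi⟩ := Function.ne_iff.mp hv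
        have : v i = 1 := by
          rcases hzm (v i) with h | h
          · exact absurd h hi
          · exact h
        exact ⟨i, Finset.mem_filter.mpr ⟨Finset.mem_univ i, this⟩⟩
      · intro k
        induction k using Fin.cases with
        | zero => rw [hone]; simp
        | succ k' =>
          rw [my_prod_eq_one_iff (w k'.succ) (hpm k'.succ)]
          have hmv' := congrFun hmv k'
          rw [Matrix.mulVec, dotProduct] at hmv'
          simp only [Pi.zero_apply] at hmv'
          have key : (∑ i ∈ Finset.univ.filter (fun i => v i = 1),
              (if w k'.succ i = 1 then (0 : ZMod 2) else 1)) =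
              ∑ i : Fin s, (B.map (Int.cast : ℤ → ZMod 2)) k' i * v i := by
            rw [Finset.sum_filter]
            apply Finset.sum_congr rfl
            intro i _
            rcases hzm (v i) with h | h
            · simp [hB, Matrix.map_apply, Matrix.of_apply,
                apply_ite (Int.cast : ℤ → ZMod 2), h]
            · rw [if_pos h, h, mul_one, Matrix.map_apply, hB, Matrix.of_apply]
              split_ifs <;> simp
          rw [key]
          exact hmv'
    · rintro ⟨I, hI, hall⟩
      refine ⟨fun i => if i ∈ I then 1 else 0, ?_, ?_⟩
      · obtain ⟨i, hi⟩ := hI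
        intro h0
        have := congrFun h0 i
        simp [hi] at this
      · funext k'
        show (Finset.univ.sum fun i => (B.map (Int.cast : ℤ → ZMod 2)) k' i *
            (if i ∈ I then (1 : ZMod 2) else 0)) = 0
        have hsum0 := (my_prod_eq_one_iff (w k'.succ) (hpm k'.succ) I).mp (hall k'.succ)
        have hterm : ∀ i, (B.map (Int.cast : ℤ → ZMod 2)) k' i *
            (if i ∈ I then (1 : ZMod 2) else 0) =
            (if i ∈ I then (if w k'.succ i = 1 then (0 : ZMod 2) else 1) else 0) := by
          intro i
          by_cases h : i ∈ I <;>
            simp [hB, Matrix.map_apply, Matrix.of_apply,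
              apply_ite (Int.cast : ℤ → ZMod 2), h]
        rw [Finset.sum_congr rfl (fun i _ => hterm i), Finset.sum_ite_mem,
          Finset.univ_inter]
        exact hsum0
  -- assemble
  rw [hdvd, hdvd2, hsing]
  constructor
  · rintro h ⟨I, hI, hall⟩
    obtain ⟨k, hk⟩ := h I hI
    rw [hall k] at hk
    norm_num at hk
  · intro h I hI
    by_contra hcon
    push_neg at hcon
    refine h ⟨I, hI, fun k => ?_⟩
    rcases my_prod_pm (w k) (hpm k) I with h1 | h1
    · exact h1
    · exact absurd h1 (hcon k)
end

section
/- If a ±1 matrix M ∈ {−1,1}^{r×r} with r ≡ 5 (mod 8) attains the Barba bound det M = (2r−1)^{1/2}(r−1)^{(r−1)/2} (with 2r−1 a perfect square), and M has first row and first column all ones with each other column containing a −1, then the saturated design with design matrix M is an affinely full-dimensional factorial design. -/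
/-- If `d` divides each factor of a product over `S`, then `d ^ S.card` divides the product. -/
lemma pow_card_dvd_prod {α : Type*} (S : Finset α) (f : α → ℤ) (d : ℤ)
    (h : ∀ a ∈ S, d ∣ f a) : d ^ S.card ∣ ∏ a ∈ S, f a := by
  have := Finset.prod_dvd_prod_of_dvd (fun _ => d) f h
  simpa using this

/-- a saturated design with r ≡ 5 (mod 8) runs attaining the Barba
bound is an affinely full-dimensional factorial design. -/
theorem barba_attaining_is_afd (s : ℕ) (hs : (s + 1) % 8 = 5)
    (w : Fin (s + 1) → Fin s → ℤ)
    (hinj : Function.Injective w)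
    (hpm : ∀ k i, w k i = 1 ∨ w k i = -1)
    (hone : w 0 = fun _ => 1)
    (hcol : ∀ i : Fin s, ∃ k, w k i = -1)
    (m : ℕ) (hm : m ^ 2 = 2 * (s + 1) - 1)
    (hdet : (Matrix.of (fun k j => Fin.cases 1 (fun i => w k i) j) :
        Matrix (Fin (s + 1)) (Fin (s + 1)) ℤ).det = (m : ℤ) * (s : ℤ) ^ (s / 2)) :
    ∀ I : Finset (Fin s), I.Nonempty → ∃ k, ∏ i ∈ I, w k i = -1 := by
  intro I hI
  by_contra hcon
  push_neg at hcon
  -- every row has product 1 over I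
  have hprod1 : ∀ k, ∏ i ∈ I, w k i = 1 := by
    intro k
    have := Finset.prod_induction (s := I) (fun i => w k i) (fun x : ℤ => x = 1 ∨ x = -1)
      (by rintro a b (rfl|rfl) (rfl|rfl) <;> norm_num) (Or.inl rfl) (fun i _ => hpm k i)
    rcases this with h | h
    · exact h
    · exact absurd h (hcon k)
  classical
  set A : Matrix (Fin (s+1)) (Fin (s+1)) ℤ :=
    Matrix.of (fun k j => Fin.cases 1 (fun i => w k i) j) with hA
  have hA0 : ∀ k, A k 0 = 1 := fun k => rfl
  have hAs : ∀ k (i : Fin s), A k i.succ = w k i := fun k i => rfl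
  have hApm : ∀ k j, A k j = 1 ∨ A k j = -1 := by
    intro k j
    induction j using Fin.cases with
    | zero => exact Or.inl (hA0 k)
    | succ i => rw [hAs]; exact hpm k i
  -- key divisibility for the combined column
  have key : ∀ k, (4:ℤ) ∣ (∑ i ∈ I, w k i) - I.card := by
    intro k
    set p : Fin s → Prop := fun i => w k i = -1 with hp
    set a : ℕ := (I.filter p).card with ha
    have haI : a ≤ I.card := Finset.card_filter_le _ _
    have hfa : ∀ i ∈ I.filter p, w k i = -1 := fun i hi => (Finset.mem_filter.mp hi).2
    have hfb : ∀ i ∈ I.filter (fun i => ¬ p i), w k i = 1 := by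
      intro i hi
      rcases hpm k i with h1 | h1
      · exact h1
      · exact absurd h1 (Finset.mem_filter.mp hi).2
    have hprodeq : ∏ i ∈ I, w k i = (-1:ℤ) ^ a := by
      rw [← Finset.prod_filter_mul_prod_filter_not I p]
      rw [Finset.prod_congr rfl hfa, Finset.prod_congr rfl hfb]
      simp [ha]
    have heven : Even a := by
      rw [hprod1 k] at hprodeq
      exact (neg_one_pow_eq_one_iff_even (by norm_num)).mp hprodeq.symm
    have hcard : (I.filter (fun i => ¬ p i)).card = I.card - a := by
      have := Finset.card_filter_add_card_filter_not (s := I) p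
      omega
    have hsum : (∑ i ∈ I, w k i) = (I.card : ℤ) - 2 * a := by
      rw [← Finset.sum_filter_add_sum_filter_not I p]
      rw [Finset.sum_congr rfl hfa, Finset.sum_congr rfl hfb]
      simp only [Finset.sum_const, Finset.sum_neg_distrib, hcard, ← ha, smul_eq_mul,
        mul_one, mul_neg_one, nsmul_eq_mul]
      push_cast [Nat.cast_sub haI]
      ring
    obtain ⟨b, hb⟩ := heven
    refine ⟨-(b:ℤ), ?_⟩
    rw [hsum, hb]
    push_cast
    ring
  -- main divisibility: 2^(s+1) ∣ det A
  have hdvd : (2:ℤ)^(s+1) ∣ A.det := by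
    set i₀ : Fin s := I.max' hI with hi₀
    set i₁ : Fin (s+1) := i₀.succ with hi₁
    set I' : Finset (Fin (s+1)) := I.image Fin.succ with hI'
    set c : Fin (s+1) → ℤ :=
      fun j => (if j ∈ I' then 1 else 0) + (if j = 0 then -(I.card:ℤ) else 0) with hc
    set G : Matrix (Fin (s+1)) (Fin (s+1)) ℤ :=
      Matrix.of (fun j j' => if j' = i₁ then c j else (if j = j' then 1 else 0)) with hG
    set E : Matrix (Fin (s+1)) (Fin (s+1)) ℤ :=
      Matrix.of (fun k l => if l = k then 1 else (if l = 0 then -1 else 0)) with hE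
    have hi₁0 : i₁ ≠ 0 := Fin.succ_ne_zero i₀
    have hi₁I' : i₁ ∈ I' := Finset.mem_image_of_mem _ (I.max'_mem hI)
    -- G is upper triangular with det 1
    have hGdet : G.det = 1 := by
      have htri : G.BlockTriangular id := by
        intro j j' hlt
        simp only [id_eq] at hlt
        simp only [hG, Matrix.of_apply]
        by_cases h1 : j' = i₁
        · subst h1
          have hjI' : j ∉ I' := by
            intro hj
            obtain ⟨i, hiI, rfl⟩ := Finset.mem_image.mp hj
            exact absurd hlt (not_lt.mpr (Fin.succ_le_succ_iff.mpr (I.le_max' i hiI)))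
          have hj0 : j ≠ 0 := by
            rintro rfl
            exact Fin.not_lt_zero _ hlt
          simp [hc, hjI', hj0]
        · rw [if_neg h1, if_neg (fun h => (ne_of_lt hlt) h.symm)]
      rw [Matrix.det_of_upperTriangular htri]
      refine Finset.prod_eq_one (fun j _ => ?_)
      simp only [hG, Matrix.of_apply]
      by_cases h1 : j = i₁
      · subst h1
        simp [hc, hi₁I', hi₁0]
      · simp [h1]
    -- E is lower triangular with det 1
    have hEdet : E.det = 1 := by
      have htri : E.BlockTriangular OrderDual.toDual := by
        intro k l hlt
        simp only [OrderDual.toDual_lt_toDual] at hlt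
        simp only [hE, Matrix.of_apply]
        rw [if_neg (ne_of_gt hlt), if_neg]
        rintro rfl
        exact Fin.not_lt_zero _ hlt
      rw [Matrix.det_of_lowerTriangular _ htri]
      refine Finset.prod_eq_one (fun j _ => ?_)
      simp [hE]
    -- entries of N := A * G
    have hNcol : ∀ k j, j ≠ i₁ → (A * G) k j = A k j := by
      intro k j hj
      rw [Matrix.mul_apply]
      rw [Finset.sum_congr rfl (fun l _ => ?_), Finset.sum_ite_eq' Finset.univ j (fun _ => A k j)]
      · simp
      · simp only [hG, Matrix.of_apply, if_neg hj]
        by_cases h : l = j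
        · subst h; simp
        · simp [h]
    have hNi₁ : ∀ k, (A * G) k i₁ = (∑ i ∈ I, w k i) - I.card := by
      intro k
      rw [Matrix.mul_apply]
      have : ∀ l, A k l * G l i₁ =
          (if l ∈ I' then A k l else 0) + (if l = 0 then -(I.card:ℤ) * A k l else 0) := by
        intro l
        have h0I' : (0 : Fin (s+1)) ∉ I' := by
          simp only [hI', Finset.mem_image]
          rintro ⟨i, -, hi⟩
          exact Fin.succ_ne_zero i hi
        simp only [hG, Matrix.of_apply, if_pos rfl, hc]
        by_cases h1 : l ∈ I' <;> by_cases h2 : l = 0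
        · exact absurd (h2 ▸ h1) h0I'
        all_goals simp [h1, h2, h0I'] <;> ring
      rw [Finset.sum_congr rfl (fun l _ => this l), Finset.sum_add_distrib]
      rw [Finset.sum_ite_eq' Finset.univ (0 : Fin (s+1)) (fun l => -(I.card:ℤ) * A k l)]
      rw [Finset.sum_ite_mem, Finset.univ_inter, hI', Finset.sum_image
        (fun a _ b _ h => Fin.succ_injective s h)]
      simp only [Finset.mem_univ, if_pos, hA0, mul_one]
      rw [Finset.sum_congr rfl (fun i _ => hAs k i)]
      ring
    have hN4 : ∀ k, (4:ℤ) ∣ (A * G) k i₁ := fun k => (hNi₁ k) ▸ key k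
    -- entries of P := E * (A * G)
    set N : Matrix (Fin (s+1)) (Fin (s+1)) ℤ := A * G with hN
    set P : Matrix (Fin (s+1)) (Fin (s+1)) ℤ := E * N with hP
    have hPeq : ∀ k j, P k j = N k j + (if k = 0 then 0 else -(N 0 j)) := by
      intro k j
      rw [hP, Matrix.mul_apply]
      have : ∀ l, E k l * N l j =
          (if l = k then N k j else 0) + (if l = 0 then (if k = 0 then 0 else -(N 0 j)) else 0) := by
        intro l
        simp only [hE, Matrix.of_apply]
        by_cases h1 : l = k <;> by_cases h2 : l = 0
        · subst h1; subst h2; simp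
        · subst h1; simp [h2]
        · subst h2; simp [h1, Ne.symm h1]
        · simp [h1, h2]
      rw [Finset.sum_congr rfl (fun l _ => this l), Finset.sum_add_distrib,
        Finset.sum_ite_eq' Finset.univ k (fun _ => N k j),
        Finset.sum_ite_eq' Finset.univ (0 : Fin (s+1)) (fun _ => if k = 0 then 0 else -(N 0 j))]
      simp
    have hP2 : ∀ k, k ≠ 0 → ∀ j, (2:ℤ) ∣ P k j := by
      intro k hk j
      rw [hPeq k j, if_neg hk]
      by_cases hj : j = i₁
      · subst hj
        exact dvd_add (dvd_trans (by norm_num) (hN4 k))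
          (dvd_neg.mpr (dvd_trans (by norm_num) (hN4 0)))
      · rw [hNcol k j hj, hNcol 0 j hj]
        rcases hApm k j with h1 | h1 <;> rcases hApm 0 j with h2 | h2 <;>
          rw [h1, h2] <;> norm_num
    have hP4 : ∀ k, (4:ℤ) ∣ P k i₁ := by
      intro k
      rw [hPeq k i₁]
      by_cases hk : k = 0
      · rw [if_pos hk, add_zero]; subst hk; exact hN4 0
      · rw [if_neg hk]
        exact dvd_add (hN4 k) (dvd_neg.mpr (hN4 0))
    -- determinant equality
    have hdetP : P.det = A.det := by
      rw [hP, Matrix.det_mul, hEdet, hN, Matrix.det_mul, hGdet, one_mul, mul_one]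
    rw [← hdetP, Matrix.det_apply']
    refine Finset.dvd_sum (fun σ _ => ?_)
    refine Dvd.dvd.mul_left ?_ _
    rw [← Finset.mul_prod_erase Finset.univ _ (Finset.mem_univ i₁)]
    have h4 : (4:ℤ) ∣ P (σ i₁) i₁ := hP4 _
    have hrest : (2:ℤ)^(s-1) ∣ ∏ i ∈ Finset.univ.erase i₁, P (σ i) i := by
      have hsub : (Finset.univ.erase i₁).erase (σ.symm 0) ⊆ Finset.univ.erase i₁ :=
        Finset.erase_subset _ _
      have h2 : (2:ℤ)^((Finset.univ.erase i₁).erase (σ.symm 0)).card ∣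
          ∏ i ∈ (Finset.univ.erase i₁).erase (σ.symm 0), P (σ i) i := by
        refine pow_card_dvd_prod _ _ _ (fun i hi => ?_)
        have hi0 : σ i ≠ 0 := by
          intro h
          exact (Finset.ne_of_mem_erase hi) (by rw [← h]; simp)
        exact hP2 (σ i) hi0 i
      have hcard : s - 1 ≤ ((Finset.univ.erase i₁).erase (σ.symm 0)).card := by
        have h1 : (Finset.univ.erase i₁ : Finset (Fin (s+1))).card = s := by
          rw [Finset.card_erase_of_mem (Finset.mem_univ _)]
          simp
        calc s - 1 = (Finset.univ.erase i₁ : Finset (Fin (s+1))).card - 1 := by rw [h1]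
          _ ≤ _ := Finset.pred_card_le_card_erase
      exact dvd_trans (dvd_trans (pow_dvd_pow 2 hcard) h2)
        (Finset.prod_dvd_prod_of_subset _ _ _ hsub)
    have hpow : (2:ℤ)^(s+1) = 4 * 2^(s-1) := by
      rw [show (4:ℤ) = 2^2 by norm_num, ← pow_add]
      congr 1
      omega
    rw [hpow]
    exact mul_dvd_mul h4 hrest
  -- final arithmetic contradiction
  rw [hdet] at hdvd
  obtain ⟨t, ht⟩ : ∃ t, s = 8 * t + 4 := ⟨s / 8, by omega⟩
  have hs2 : s / 2 = 4 * t + 2 := by omega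
  have hsplit : (m : ℤ) * (s : ℤ) ^ (s / 2) = 2^s * ((m:ℤ) * (2*t+1)^(4*t+2)) := by
    rw [hs2, ht]
    push_cast
    rw [show ((8:ℤ) * t + 4) = 2^2 * (2*t+1) by ring, mul_pow, ← pow_mul]
    ring_nf
  rw [hsplit, pow_succ'] at hdvd
  have h2 : (2:ℤ) ∣ (m:ℤ) * (2*t+1)^(4*t+2) :=
    (mul_dvd_mul_iff_left (a := (2:ℤ)^s) (pow_ne_zero s two_ne_zero)).mp
      (by rwa [mul_comm ((2:ℤ)^s) 2])
  have hm2 : m % 2 = 1 := by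
    have h := Nat.pow_mod m 2 2
    rw [hm] at h
    rcases Nat.mod_two_eq_zero_or_one m with h1 | h1 <;> rw [h1] at h <;> omega
  have hmodd : Odd (m:ℤ) := by rw [Int.odd_iff]; omega
  have hodd : Odd ((m:ℤ) * (2*t+1)^(4*t+2)) :=
    hmodd.mul (Odd.pow ⟨(t:ℤ), by ring⟩)
  rw [Int.odd_iff] at hodd
  omega
end

section
/- Let F ⊆ {−1,1}^s be nonempty with indicator function coefficients b_I = (1/2^s) Σ_{x∈F} ∏_{i∈I} x_i. Then F is affinely full-dimensional (not contained in any set of the form {x : ∏_{i∈I} x_i = ε} with I nonempty and ε ∈ {−1,1}) if and only if |b_I| < b_∅ for all nonempty I ⊆ {1,...,s}. -/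
/-- F is affinely full-dimensional iff |b_I| < b_∅ for all
nonempty I. -/
theorem afd_iff_indicator_coefficients (s : ℕ) (F : Finset (Fin s → ℚ))
    (hF : F.Nonempty)
    (hpm : ∀ x ∈ F, ∀ i, x i = 1 ∨ x i = -1)
    (b : Finset (Fin s) → ℚ)
    (hb : ∀ I, b I = (1 / 2 ^ s) * ∑ x ∈ F, ∏ i ∈ I, x i) :
    (∀ I : Finset (Fin s), I.Nonempty → ∀ ε : ℚ, (ε = 1 ∨ ε = -1) →
        ¬ ∀ x ∈ F, ∏ i ∈ I, x i = ε) ↔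
      ∀ I : Finset (Fin s), I.Nonempty → |b I| < b ∅ := by
  have hpow : (0:ℚ) < 1 / 2 ^ s := by positivity
  have key : ∀ (I : Finset (Fin s)), ∀ x ∈ F,
      (∏ i ∈ I, x i = 1 ∨ ∏ i ∈ I, x i = -1) := by
    intro I x hx
    refine Finset.prod_induction _ (fun r => r = 1 ∨ r = -1) ?_ (Or.inl rfl) ?_
    · rintro a c (rfl|rfl) (rfl|rfl) <;> norm_num
    · intro i _; exact hpm x hx i
  have hb0 : b ∅ = (1 / 2 ^ s) * F.card := by
    rw [hb]; simp
  constructor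
  · intro h I hI
    have h1 := h I hI 1 (Or.inl rfl)
    have h2 := h I hI (-1) (Or.inr rfl)
    push_neg at h1 h2
    obtain ⟨a, ha, ha1⟩ := h1
    obtain ⟨c, hc, hc1⟩ := h2
    have hpa : ∏ i ∈ I, a i = -1 := (key I a ha).resolve_left ha1
    have hpc : ∏ i ∈ I, c i = 1 := (key I c hc).resolve_right hc1
    have hac : a ≠ c := by rintro rfl; rw [hpa] at hpc; norm_num at hpc
    set T := (F.erase a).erase c with hT
    have hcmem : c ∈ F.erase a := Finset.mem_erase.2 ⟨fun h => hac h.symm, hc⟩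
    have hsum : ∑ x ∈ F, ∏ i ∈ I, x i = ∑ x ∈ T, ∏ i ∈ I, x i := by
      rw [← Finset.add_sum_erase _ _ ha, ← Finset.add_sum_erase _ _ hcmem,
        hpa, hpc]
      ring
    have hcard : (T.card : ℚ) < F.card := by
      have h1 : T.card ≤ (F.erase a).card := Finset.card_erase_le
      have h2 : (F.erase a).card < F.card := Finset.card_erase_lt_of_mem ha
      exact_mod_cast lt_of_le_of_lt h1 h2
    have habs : |∑ x ∈ F, ∏ i ∈ I, x i| < F.card := by
      rw [hsum]
      calc |∑ x ∈ T, ∏ i ∈ I, x i| ≤ ∑ x ∈ T, |∏ i ∈ I, x i| :=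
            Finset.abs_sum_le_sum_abs _ _
        _ ≤ ∑ x ∈ T, 1 := by
            refine Finset.sum_le_sum fun x hx => ?_
            rcases key I x (Finset.mem_of_mem_erase (Finset.mem_of_mem_erase hx)) with h | h <;>
              rw [h] <;> norm_num
        _ = T.card := by simp
        _ < F.card := hcard
    rw [hb, hb0, abs_mul, abs_of_pos hpow]
    exact mul_lt_mul_of_pos_left habs hpow
  · intro h I hI ε hε hall
    have hsum : ∑ x ∈ F, ∏ i ∈ I, x i = F.card * ε := by
      rw [Finset.sum_congr rfl hall]; simp [mul_comm]
    have : |b I| = b ∅ := by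
      rw [hb, hb0, hsum, abs_mul, abs_of_pos hpow, abs_mul]
      have : |ε| = 1 := by rcases hε with rfl | rfl <;> norm_num
      rw [this]
      simp [abs_of_nonneg (by positivity : (0:ℚ) ≤ (F.card:ℚ))]
    exact absurd this (ne_of_lt (h I hI))
end
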